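/- arXiv:2205.15369 — 4 statements merged into one kernel-verified Lean document; each statement's English description precedes it below -/
import Mathlib

section
/- Let G be a nilpotent group of nilpotency class at most 2, let w be a word in the free group F_2 on two generators, and let a ∈ w(G). Then for every integer n, a^n ∈ w(G). -/
/-- The image of the word map on `G` induced by a word `w` in the free group
on `d` generators. -/
def wordImage {d : ℕ} (G : Type*) [Group G] (w : FreeGroup (Fin d)) : Set G :=
  Set.range fun f : Fin d → G => FreeGroup.lift f w

/-- `A` is a word image impostor in `G`: it contains `1`, is invariant under all
automorphisms of `G`, and is not the image of any word map. -/
def IsWordImageImpostor (G : Type*) [Group G] (A : Set G) : Prop :=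
  (1 : G) ∈ A ∧ (∀ (φ : G ≃* G), ∀ g ∈ A, φ g ∈ A) ∧
    ¬ ∃ (d : ℕ) (_ : 1 ≤ d) (w : FreeGroup (Fin d)), A = wordImage G w

/-- `G` is an extraspecial `p`-group: a `p`-group whose center, commutator subgroup
and Frattini subgroup coincide and have order `p`. -/
def IsExtraspecial (p : ℕ) (G : Type*) [Group G] : Prop :=
  IsPGroup p G ∧ Subgroup.center G = commutator G ∧
    Subgroup.center G = frattini G ∧ Nat.card (Subgroup.center G) = p


open scoped commutatorElement

def ch2 (n : ℤ) : ℤ := n * (n - 1) / 2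

lemma two_ch2 (n : ℤ) : 2 * ch2 n = n * (n - 1) := by
  have h : (2:ℤ) ∣ n * (n - 1) := by
    obtain ⟨r, hr⟩ := Int.even_mul_succ_self (n - 1)
    exact ⟨r, by linear_combination hr⟩
  exact Int.mul_ediv_cancel' h

lemma ch2_add_one (n : ℤ) : ch2 (n + 1) = ch2 n + n := by
  apply mul_left_cancel₀ (a := (2:ℤ)) two_ne_zero
  linear_combination two_ch2 (n + 1) - two_ch2 n

lemma ch2_sub_one (n : ℤ) : ch2 (n - 1) = ch2 n - (n - 1) := by
  apply mul_left_cancel₀ (a := (2:ℤ)) two_ne_zero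
  linear_combination two_ch2 (n - 1) - two_ch2 n

lemma ch2_zero : ch2 0 = 0 := by norm_num [ch2]

section GroupSide
variable {G : Type*} [Group G]

lemma comm_central (hG : commutator G ≤ Subgroup.center G) (g h x : G) :
    ⁅g, h⁆ * x = x * ⁅g, h⁆ := by
  have h1 : ⁅g, h⁆ ∈ commutator G := by
    rw [commutator_def]
    exact Subgroup.commutator_mem_commutator (Subgroup.mem_top g) (Subgroup.mem_top h)
  exact ((Subgroup.mem_center_iff.mp (hG h1)) x).symm

lemma central_swap {u v zc : G} (hc : ∀ x : G, zc * x = x * zc)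
    (hbase : v * u = u * v * zc) (B : ℤ) : v ^ B * u = u * (v ^ B * zc ^ B) := by
  have h1 : u⁻¹ * v * u = v * zc := by
    rw [mul_assoc, hbase]; group
  have h2 : (u⁻¹ * v * u) ^ B = u⁻¹ * v ^ B * u := by
    simpa using conj_zpow (i := B) (a := u⁻¹) (b := v)
  have h3 : Commute v zc := (hc v).symm
  have h4 : (v * zc) ^ B = v ^ B * zc ^ B := h3.mul_zpow B
  have h5 : u⁻¹ * v ^ B * u = v ^ B * zc ^ B := by rw [← h2, h1, h4]
  calc v ^ B * u = u * (u⁻¹ * v ^ B * u) := by group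
    _ = u * (v ^ B * zc ^ B) := by rw [h5]

lemma swap_pow (hG : commutator G ≤ Subgroup.center G) (g h : G) (A B : ℤ) :
    h ^ B * g ^ A = g ^ A * (h ^ B * ⁅g, h⁆ ^ (-(B * A))) := by
  set z := ⁅g, h⁆ with hzdef
  have hcom : ∀ x : G, Commute z x := fun x => comm_central hG g h x
  have base1 : h * g = g * h * z⁻¹ := by
    have e1 : h * g = z⁻¹ * (g * h) := by rw [hzdef]; group
    rw [e1, ((hcom (g * h)).inv_left).eq]
  have s1 : h ^ B * g = g * (h ^ B * (z⁻¹) ^ B) :=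
    central_swap (fun x => ((hcom x).inv_left).eq) base1 B
  have base2 : g * h ^ B = h ^ B * g * z ^ B := by
    rw [s1]; group
  have s2 : g ^ A * h ^ B = h ^ B * (g ^ A * (z ^ B) ^ A) :=
    central_swap (fun x => ((hcom x).zpow_left B).eq) base2 A
  calc h ^ B * g ^ A
      = (h ^ B * (g ^ A * (z ^ B) ^ A)) * ((z ^ B) ^ A)⁻¹ := by group
    _ = (g ^ A * h ^ B) * ((z ^ B) ^ A)⁻¹ := by rw [← s2]
    _ = g ^ A * (h ^ B * z ^ (-(B * A))) := by group

lemma mulPhi (hG : commutator G ≤ Subgroup.center G) (g h : G) (A B C A' B' C' : ℤ) :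
    (g ^ A * (h ^ B * ⁅g, h⁆ ^ C)) * (g ^ A' * (h ^ B' * ⁅g, h⁆ ^ C'))
      = g ^ (A + A') * (h ^ (B + B') * ⁅g, h⁆ ^ (C + C' - B * A')) := by
  set z := ⁅g, h⁆ with hzdef
  have hcom : ∀ x : G, Commute z x := fun x => comm_central hG g h x
  have m1 : ∀ (m k : ℤ) (x : G), z ^ m * (g ^ k * x) = g ^ k * (z ^ m * x) := fun m k x => by
    rw [← mul_assoc, ((hcom (g ^ k)).zpow_left m).eq, mul_assoc]
  have m2 : ∀ (m k : ℤ) (x : G), z ^ m * (h ^ k * x) = h ^ k * (z ^ m * x) := fun m k x => by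
    rw [← mul_assoc, ((hcom (h ^ k)).zpow_left m).eq, mul_assoc]
  have m3 : ∀ (mB mA : ℤ) (x : G), h ^ mB * (g ^ mA * x)
      = g ^ mA * (h ^ mB * (z ^ (-(mB * mA)) * x)) := fun mB mA x => by
    rw [← mul_assoc, swap_pow hG g h, mul_assoc, mul_assoc]
  have c1 : ∀ (m m' : ℤ) (x : G), g ^ m * (g ^ m' * x) = g ^ (m + m') * x := fun m m' x => by
    rw [← mul_assoc, ← zpow_add]
  have c2 : ∀ (m m' : ℤ) (x : G), h ^ m * (h ^ m' * x) = h ^ (m + m') * x := fun m m' x => by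
    rw [← mul_assoc, ← zpow_add]
  have t3 : ∀ (m m' : ℤ), z ^ m * z ^ m' = z ^ (m + m') := fun m m' => (zpow_add z m m').symm
  simp only [mul_assoc, m1, m2, m3, c1, c2, t3]
  group

lemma invPhi (hG : commutator G ≤ Subgroup.center G) (g h : G) (A B C : ℤ) :
    (g ^ A * (h ^ B * ⁅g, h⁆ ^ C))⁻¹ = g ^ (-A) * (h ^ (-B) * ⁅g, h⁆ ^ (-C - B * A)) := by
  symm
  apply eq_inv_of_mul_eq_one_left
  rw [mulPhi hG]
  rw [show -A + A = 0 by ring, show -B + B = 0 by ring,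
    show -C - B * A + C - -B * A = 0 by ring]
  simp

lemma zpowPhi (hG : commutator G ≤ Subgroup.center G) (g h : G) (A B C : ℤ) (m : ℤ) :
    (g ^ A * (h ^ B * ⁅g, h⁆ ^ C)) ^ m
      = g ^ (m * A) * (h ^ (m * B) * ⁅g, h⁆ ^ (m * C - A * B * ch2 m)) := by
  induction m using Int.induction_on with
  | zero =>
    rw [show (0:ℤ) * A = 0 by ring, show (0:ℤ) * B = 0 by ring,
      show (0:ℤ) * C - A * B * ch2 0 = 0 by rw [ch2_zero]; ring]
    simp
  | succ k ih =>
    rw [zpow_add_one, ih, mulPhi hG]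
    rw [show (k:ℤ) * A + A = ((k:ℤ) + 1) * A by ring,
      show (k:ℤ) * B + B = ((k:ℤ) + 1) * B by ring,
      show (k:ℤ) * C - A * B * ch2 k + C - (k:ℤ) * B * A
        = ((k:ℤ) + 1) * C - A * B * ch2 ((k:ℤ) + 1) by rw [ch2_add_one]; ring]
  | pred k ih =>
    rw [zpow_sub_one, ih, invPhi hG, mulPhi hG]
    rw [show (-(k:ℤ)) * A + -A = (-(k:ℤ) - 1) * A by ring,
      show (-(k:ℤ)) * B + -B = (-(k:ℤ) - 1) * B by ring,
      show (-(k:ℤ)) * C - A * B * ch2 (-(k:ℤ)) + (-C - B * A) - (-(k:ℤ)) * B * (-A)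
        = (-(k:ℤ) - 1) * C - A * B * ch2 (-(k:ℤ) - 1) by rw [ch2_sub_one]; ring]

lemma commPhi (hG : commutator G ≤ Subgroup.center G) (g h : G) (A B C A' B' C' : ℤ) :
    ⁅g ^ A * (h ^ B * ⁅g, h⁆ ^ C), g ^ A' * (h ^ B' * ⁅g, h⁆ ^ C')⁆
      = ⁅g, h⁆ ^ (A * B' - A' * B) := by
  rw [commutatorElement_def, invPhi hG, invPhi hG, mulPhi hG, mulPhi hG, mulPhi hG]
  group

end GroupSide

lemma phi_congr {G : Type*} [Group G] (g h : G) {A B C A' B' C' : ℤ}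
    (e1 : A = A') (e2 : B = B') (e3 : C = C') :
    g ^ A * (h ^ B * ⁅g, h⁆ ^ C) = g ^ A' * (h ^ B' * ⁅g, h⁆ ^ C') := by
  rw [e1, e2, e3]

lemma NF {G : Type*} [Group G] (hG : commutator G ≤ Subgroup.center G)
    (w : FreeGroup (Fin 2)) : ∃ α β γ : ℤ, ∀ f : Fin 2 → G,
    FreeGroup.lift f w = (f 0) ^ α * ((f 1) ^ β * ⁅f 0, f 1⁆ ^ γ) := by
  induction w using FreeGroup.induction_on with
  | C1 => exact ⟨0, 0, 0, fun f => by simp⟩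
  | of x =>
    have hp : ∀ (i : Fin 2), (pure i : FreeGroup (Fin 2)) = FreeGroup.of i := fun _ => rfl
    fin_cases x
    · exact ⟨1, 0, 0, fun f => by simp [hp]⟩
    · exact ⟨0, 1, 0, fun f => by simp [hp]⟩
  | inv_of x _ =>
    have hp : ∀ (i : Fin 2), (pure i : FreeGroup (Fin 2)) = FreeGroup.of i := fun _ => rfl
    fin_cases x
    · exact ⟨-1, 0, 0, fun f => by simp [hp]⟩
    · exact ⟨0, -1, 0, fun f => by simp [hp]⟩
  | mul u v ihu ihv =>
    obtain ⟨a1, b1, c1, H1⟩ := ihu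
    obtain ⟨a2, b2, c2, H2⟩ := ihv
    exact ⟨a1 + a2, b1 + b2, c1 + c2 - b1 * a2, fun f => by
      rw [map_mul, H1 f, H2 f, mulPhi hG]⟩

lemma parity_lemma : ∀ d a b t k n : ZMod 2, b*t - a*k = 1 - n →
    (n+b*t)*(b*k)*a*(d*a-1) - (a*t)*(n-a*k)*b*(d*b-1) - 2*a*a*b*b*k*t*d - a*b*n*(n-1)*d = 0 := by
  decide

lemma arith_main (α β n : ℤ) : ∃ p q r s e f : ℤ,
    p*α + r*β = n*α ∧ q*α + s*β = n*β ∧ p*s - q*r = n ∧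
    e*α + f*β = p*q*ch2 α + r*s*ch2 β + q*r*(α*β) - α*β*ch2 n := by
  by_cases h0 : α = 0 ∧ β = 0
  · exact ⟨n, 0, 0, 1, 0, 0, by rw [h0.1, h0.2]; ring, by rw [h0.1, h0.2]; ring,
      by ring, by rw [h0.1, h0.2]; ring⟩
  · obtain ⟨D, a, b, hD2, ha, hb, x, y, hxy⟩ :
        ∃ D a b : ℤ, D ≠ 0 ∧ α = D*a ∧ β = D*b ∧ ∃ x y : ℤ, x*a + y*b = 1 := by
      have hg : α ≠ 0 ∨ β ≠ 0 := by tauto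
      have hpos : 0 < Int.gcd α β := Int.gcd_pos_iff.mpr hg
      refine ⟨(Int.gcd α β : ℤ), α / (Int.gcd α β : ℤ), β / (Int.gcd α β : ℤ), ?_, ?_, ?_, ?_⟩
      · exact_mod_cast hpos.ne'
      · exact (Int.mul_ediv_cancel' (Int.gcd_dvd_left _ _)).symm
      · exact (Int.mul_ediv_cancel' (Int.gcd_dvd_right _ _)).symm
      · have hcop : IsCoprime (α / (Int.gcd α β : ℤ)) (β / (Int.gcd α β : ℤ)) :=
          Int.isCoprime_iff_gcd_eq_one.mpr (Int.gcd_div_gcd_div_gcd hpos)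
        obtain ⟨u, v, huv⟩ := hcop
        exact ⟨u, v, huv⟩
    subst ha hb
    set T : ℤ := y*(1-n) with hT
    set K : ℤ := -(x*(1-n)) with hK
    have hTK : b*T - a*K = 1 - n := by rw [hT, hK]; linear_combination (1-n)*hxy
    set Z : ℤ := (n+b*T)*(b*K)*a*(D*a-1) - (a*T)*(n-a*K)*b*(D*b-1)
        - 2*a*a*b*b*K*T*D - a*b*n*(n-1)*D with hZ
    have hZeven : Even Z := by
      have hcast : ((Z : ℤ) : ZMod 2) = 0 := by
        rw [hZ]
        push_cast
        exact parity_lemma D a b T K n (by exact_mod_cast congrArg (fun m : ℤ => (m : ZMod 2)) hTK)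
      have h2 : (2:ℤ) ∣ Z := (ZMod.intCast_zmod_eq_zero_iff_dvd Z 2).mp hcast
      obtain ⟨c, hc⟩ := h2
      exact ⟨c, by linarith⟩
    obtain ⟨W, hW⟩ := hZeven
    refine ⟨n + b*T, b*K, -(a*T), n - a*K, x*W, y*W, ?_, ?_, ?_, ?_⟩
    · ring
    · ring
    · linear_combination n*hTK
    · have key : 2*((n + b*T)*(b*K)*ch2 (D*a) + (-(a*T))*(n - a*K)*ch2 (D*b)
          + (b*K)*(-(a*T))*((D*a)*(D*b)) - (D*a)*(D*b)*ch2 n) = 2*(D*W) := by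
        linear_combination ((n + b*T)*(b*K))*two_ch2 (D*a)
          + ((-(a*T))*(n - a*K))*two_ch2 (D*b) - ((D*a)*(D*b))*two_ch2 n + D*hW
      have key2 := mul_left_cancel₀ (a := (2:ℤ)) two_ne_zero key
      rw [key2]
      linear_combination (D*W)*hxy


/-- In a nilpotent group of class at most 2, word images of two-variable words
are closed under taking integer powers. -/
theorem word_image_closed_under_powers (G : Type*) [Group G]
    (hG : commutator G ≤ Subgroup.center G) (w : FreeGroup (Fin 2))
    (a : G) (ha : a ∈ wordImage G w) (n : ℤ) :
    a ^ n ∈ wordImage G w := by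
  obtain ⟨f, hf⟩ := ha
  have hf' : FreeGroup.lift f w = a := hf
  obtain ⟨α, β, γ, HNF⟩ := NF hG w
  obtain ⟨p, q, r, s, e, f2, h1, h2, h3, h4⟩ := arith_main α β n
  have ha2 : a = (f 0) ^ α * ((f 1) ^ β * ⁅f 0, f 1⁆ ^ γ) := by rw [← hf', HNF f]
  have han : a ^ n = (f 0) ^ (n*α) * ((f 1) ^ (n*β) * ⁅f 0, f 1⁆ ^ (n*γ - α*β*ch2 n)) := by
    rw [ha2, zpowPhi hG]
  refine ⟨![f 0 ^ p * (f 1 ^ q * ⁅f 0, f 1⁆ ^ e), f 0 ^ r * (f 1 ^ s * ⁅f 0, f 1⁆ ^ f2)], ?_⟩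
  show FreeGroup.lift ![f 0 ^ p * (f 1 ^ q * ⁅f 0, f 1⁆ ^ e),
      f 0 ^ r * (f 1 ^ s * ⁅f 0, f 1⁆ ^ f2)] w = a ^ n
  have h5 := HNF ![f 0 ^ p * (f 1 ^ q * ⁅f 0, f 1⁆ ^ e), f 0 ^ r * (f 1 ^ s * ⁅f 0, f 1⁆ ^ f2)]
  simp only [Matrix.cons_val_zero, Matrix.cons_val_one, Matrix.head_cons] at h5
  rw [h5, commPhi hG, show p * s - r * q = n by linear_combination h3, ← zpow_mul,
    show ⁅f 0, f 1⁆ ^ (n * γ) = f 0 ^ (0:ℤ) * (f 1 ^ (0:ℤ) * ⁅f 0, f 1⁆ ^ (n*γ)) by simp,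
    zpowPhi hG, zpowPhi hG, mulPhi hG, mulPhi hG, han]
  exact phi_congr _ _ (by linear_combination h1) (by linear_combination h2)
    (by linear_combination h4)
end

section
/- Let G be a finite group. Then there exist d ≥ 1 and a word w in the free group F_d on d generators such that the word image w(G) equals the commutator subgroup [G,G] (as a set). -/
open scoped commutatorElement

/-- The commutator subgroup of a finite group is a word image. -/
theorem commutator_is_word_image (G : Type*) [Group G] [Finite G] :
    ∃ (d : ℕ) (_ : 1 ≤ d) (w : FreeGroup (Fin d)),
      wordImage G w = (commutator G : Set G) := by
  classical
  -- every element of the commutator subgroup is a product of commutators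
  have hmem : ∀ g : commutator G, ∃ l : List G,
      (∀ x ∈ l, x ∈ commutatorSet G) ∧ l.prod = (g : G) := by
    rintro ⟨g, hg⟩
    rw [commutator_eq_closure] at hg
    have hg' : g ∈ (Subgroup.closure (commutatorSet G)).toSubmonoid := hg
    rw [Subgroup.closure_toSubmonoid] at hg'
    obtain ⟨l, hl, hprod⟩ := Submonoid.exists_list_of_mem_closure hg'
    refine ⟨l, ?_, hprod⟩
    intro x hx
    rcases hl x hx with h | h
    · exact h
    · obtain ⟨a, b, hab⟩ := h
      exact ⟨b, a, by rw [← commutatorElement_inv, hab, inv_inv]⟩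
  choose L hL hLprod using hmem
  have : Nonempty (commutator G) := ⟨1⟩
  obtain ⟨g₀, hg₀⟩ := Finite.exists_max fun g : commutator G => (L g).length
  set N : ℕ := (L g₀).length + 1 with hN
  -- each element is a product of exactly N commutators (pad with 1)
  have hunif : ∀ g : commutator G, ∃ c : Fin N → G × G,
      (List.ofFn fun i => ⁅(c i).1, (c i).2⁆).prod = (g : G) := by
    intro g
    set l := L g ++ List.replicate (N - (L g).length) 1 with hl
    have hlen : l.length = N := by
      simp [hl]
      have := hg₀ g
      omega
    have hmem' : ∀ x ∈ l, x ∈ commutatorSet G := by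
      intro x hx
      rcases List.mem_append.mp hx with h | h
      · exact hL g x h
      · rw [List.eq_of_mem_replicate h]
        exact one_mem_commutatorSet G
    have hlp : l.prod = (g : G) := by
      simp [hl, hLprod g]
    have hch : ∀ i : Fin N, ∃ p : G × G, ⁅p.1, p.2⁆ = l[(i : ℕ)]'(by rw [hlen]; exact i.isLt) := by
      intro i
      obtain ⟨a, b, hab⟩ := hmem' _ (l.getElem_mem (by rw [hlen]; exact i.isLt))
      exact ⟨(a, b), hab⟩
    choose c hc using hch
    refine ⟨c, ?_⟩
    rw [← hlp]
    congr 1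
    apply List.ext_getElem
    · simp [hlen, hN]
    · intro i h1 h2
      simp only [List.getElem_ofFn]
      exact hc ⟨i, by simp at h1; omega⟩
  -- the word
  refine ⟨2 * N, by omega, (List.ofFn fun i : Fin N =>
    ⁅FreeGroup.of (⟨2 * i, by omega⟩ : Fin (2 * N)),
     FreeGroup.of (⟨2 * i + 1, by omega⟩ : Fin (2 * N))⁆).prod, ?_⟩
  ext g
  constructor
  · rintro ⟨f, rfl⟩
    show (FreeGroup.lift f) _ ∈ commutator G
    rw [map_list_prod, List.map_ofFn]
    apply Subgroup.list_prod_mem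
    intro x hx
    obtain ⟨i, rfl⟩ := List.mem_ofFn.mp hx
    simp only [Function.comp_apply, map_commutatorElement]
    exact Subgroup.commutator_mem_commutator (Subgroup.mem_top _) (Subgroup.mem_top _)
  · intro hg
    obtain ⟨c, hc⟩ := hunif ⟨g, hg⟩
    refine ⟨fun j => if (j : ℕ) % 2 = 0 then (c ⟨(j : ℕ) / 2, by omega⟩).1
      else (c ⟨(j : ℕ) / 2, by omega⟩).2, ?_⟩
    have hc' : (List.ofFn fun i => ⁅(c i).1, (c i).2⁆).prod = g := hc
    show (FreeGroup.lift _) _ = g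
    rw [map_list_prod, List.map_ofFn, ← hc']
    refine congrArg List.prod (congrArg List.ofFn (funext fun i => ?_))
    simp only [Function.comp_apply, map_commutatorElement, FreeGroup.lift_apply_of]
    have h1 : (2 * (i : ℕ)) % 2 = 0 := by omega
    have h2 : ¬ ((2 * (i : ℕ) + 1) % 2 = 0) := by omega
    have h3 : (2 * (i : ℕ)) / 2 = (i : ℕ) := by omega
    have h4 : (2 * (i : ℕ) + 1) / 2 = (i : ℕ) := by omega
    simp only [h1, h3, h4, if_pos rfl, if_neg h2, Fin.eta]
    simp
end

section
/- Let p be a prime and G a finite p-group. Then there exist d ≥ 1 and a word w in the free group F_d on d generators such that the word image w(G) equals the Frattini subgroup Φ(G) (as a set). -/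
open Subgroup Pointwise
open scoped commutatorElement

section Auxiliary

variable {p : ℕ} {G : Type*} [Group G]

/-- The set of elements of the form `a ^ p * ⁅b, c⁆`. -/
def pcwSet (p : ℕ) (G : Type*) [Group G] : Set G := {x | ∃ a b c : G, x = a ^ p * ⁅b, c⁆}

lemma one_mem_pcwSet : (1 : G) ∈ pcwSet p G := ⟨1, 1, 1, by simp⟩

lemma conj_mem_pcwSet {x : G} (g : G) (hx : x ∈ pcwSet p G) : g * x * g⁻¹ ∈ pcwSet p G := by
  obtain ⟨a, b, c, rfl⟩ := hx
  refine ⟨g * a * g⁻¹, g * b * g⁻¹, g * c * g⁻¹, ?_⟩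
  have h : ∀ y : G, g * y * g⁻¹ = (MulAut.conj g) y := fun y => rfl
  simp only [h, ← map_pow, ← map_commutatorElement, ← map_mul]

lemma inv_mem_pcwSet {x : G} (hx : x ∈ pcwSet p G) : x⁻¹ ∈ pcwSet p G := by
  obtain ⟨a, b, c, rfl⟩ := hx
  refine ⟨a⁻¹, a ^ p * c * (a ^ p)⁻¹, a ^ p * b * (a ^ p)⁻¹, ?_⟩
  have h : ∀ y : G, a ^ p * y * (a ^ p)⁻¹ = (MulAut.conj (a ^ p)) y := fun y => rfl
  simp only [h, ← map_commutatorElement]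
  simp only [MulAut.conj_apply, mul_inv_rev, commutatorElement_inv, inv_pow]
  group

lemma pcw_normal : (Subgroup.closure (pcwSet p G)).Normal := by
  constructor
  intro x hx g
  induction hx using closure_induction with
  | mem y hy => exact subset_closure (conj_mem_pcwSet g hy)
  | one => simpa using one_mem _
  | mul y z hy hz ihy ihz =>
    have : g * (y * z) * g⁻¹ = (g * y * g⁻¹) * (g * z * g⁻¹) := by group
    rw [this]; exact mul_mem ihy ihz
  | inv y hy ihy =>
    have : g * y⁻¹ * g⁻¹ = (g * y * g⁻¹)⁻¹ := by group
    rw [this]; exact inv_mem ihy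

lemma pcw_subset_coatom [Finite G] (hp : p.Prime) (hG : IsPGroup p G) {M : Subgroup G}
    (hM : IsCoatom M) : pcwSet p G ⊆ (M : Set G) := by
  haveI := Fact.mk hp
  haveI hMn : M.Normal := by
    have h := (isNilpotent_of_finite_tfae (G := G)).out 0 2
    exact (h.mp hG.isNilpotent) M hM
  have hQ : IsPGroup p (G ⧸ M) := hG.to_quotient M
  have hnt : Nontrivial (G ⧸ M) := by
    obtain ⟨g, hg⟩ : ∃ g, g ∉ M := by
      by_contra h; push_neg at h; exact hM.1 (eq_top_iff.mpr fun x _ => h x)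
    exact ⟨⟨QuotientGroup.mk g, 1, by simpa [QuotientGroup.eq_one_iff] using hg⟩⟩
  obtain ⟨n, hn⟩ := IsPGroup.iff_card.mp hQ
  have hpd : p ∣ Nat.card (G ⧸ M) := by
    cases n with
    | zero =>
      exfalso
      rw [pow_zero] at hn
      have := (Nat.card_eq_one_iff_unique.mp hn).1
      exact not_subsingleton _ this
    | succ n => rw [hn]; exact dvd_pow_self p n.succ_ne_zero
  obtain ⟨h, hh⟩ := exists_prime_orderOf_dvd_card' (G := G ⧸ M) p hpd
  have hne1 : h ≠ 1 := by
    intro e; rw [e, orderOf_one] at hh; exact hp.one_lt.ne' hh.symm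
  have htop : Subgroup.zpowers h = ⊤ := by
    have hMH : M ≤ Subgroup.comap (QuotientGroup.mk' M) (Subgroup.zpowers h) := fun x hx => by
      have : QuotientGroup.mk' M x = 1 := (QuotientGroup.eq_one_iff x).mpr hx
      simp [Subgroup.mem_comap, this, Subgroup.one_mem]
    rcases hMH.lt_or_eq with hlt | heq
    · have hHtop := hM.2 _ hlt
      calc Subgroup.zpowers h
          = Subgroup.map (QuotientGroup.mk' M)
              (Subgroup.comap (QuotientGroup.mk' M) (Subgroup.zpowers h)) :=
            (Subgroup.map_comap_eq_self_of_surjective (QuotientGroup.mk'_surjective M) _).symm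
        _ = Subgroup.map (QuotientGroup.mk' M) ⊤ := by rw [hHtop]
        _ = ⊤ := by
            rw [← MonoidHom.range_eq_map,
              MonoidHom.range_eq_top.mpr (QuotientGroup.mk'_surjective M)]
    · exfalso
      obtain ⟨g, hg⟩ := QuotientGroup.mk'_surjective M h
      have hgH : g ∈ Subgroup.comap (QuotientGroup.mk' M) (Subgroup.zpowers h) := by
        simp [Subgroup.mem_comap, hg, Subgroup.mem_zpowers]
      rw [← heq] at hgH
      have h1 : QuotientGroup.mk' M g = 1 := (QuotientGroup.eq_one_iff g).mpr hgH
      apply hne1; rw [← hg]; exact h1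
  have hcard : Nat.card (G ⧸ M) = p := by
    have : Nat.card (G ⧸ M) = Nat.card (⊤ : Subgroup (G ⧸ M)) :=
      (Nat.card_congr Subgroup.topEquiv.toEquiv).symm
    rw [this, ← htop, Nat.card_zpowers, hh]
  have hexp : ∀ x : G ⧸ M, x ^ p = 1 := fun x => by
    rw [← hcard]; exact pow_card_eq_one'
  have hcomm : ∀ a b : G ⧸ M, a * b = b * a := by
    intro a b
    obtain ⟨i, rfl⟩ : a ∈ Subgroup.zpowers h := htop ▸ Subgroup.mem_top a
    obtain ⟨j, rfl⟩ : b ∈ Subgroup.zpowers h := htop ▸ Subgroup.mem_top b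
    rw [← zpow_add, ← zpow_add, add_comm]
  rintro x ⟨a, b, c, rfl⟩
  rw [SetLike.mem_coe, ← QuotientGroup.eq_one_iff]
  have : (QuotientGroup.mk (a ^ p * ⁅b, c⁆) : G ⧸ M)
      = (QuotientGroup.mk a : G ⧸ M) ^ p
        * ⁅(QuotientGroup.mk b : G ⧸ M), QuotientGroup.mk c⁆ := by
    rfl
  rw [this, hexp, commutatorElement_eq_one_iff_mul_comm.mpr (hcomm _ _), one_mul]

lemma frattini_eq_bot_of_elementary {Q : Type*} [Group Q] [Finite Q] (hp : p.Prime)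
    (hexp : ∀ x : Q, x ^ p = 1) (hcomm : ∀ a b : Q, a * b = b * a) : frattini Q = ⊥ := by
  have norm : ∀ K : Subgroup Q, K.Normal := fun K =>
    ⟨fun n hn g => by rw [hcomm g n, mul_assoc, mul_inv_cancel, mul_one]; exact hn⟩
  rw [eq_bot_iff]
  intro x hx
  rw [Subgroup.mem_bot]
  by_contra hx1
  obtain ⟨K, hK, hKmax⟩ := Set.Finite.exists_maximalFor id {K : Subgroup Q | x ∉ K}
    (Set.toFinite _) ⟨⊥, by simpa using hx1⟩
  simp only [Set.mem_setOf_eq, id] at hK hKmax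
  have key : ∀ y : Q, y ∈ K ⊔ Subgroup.zpowers x := by
    intro y
    by_cases hy : y ∈ K
    · exact Subgroup.mem_sup_left hy
    · have hxmem : x ∈ K ⊔ Subgroup.zpowers y := by
        by_contra hxmem
        have hlt : K < K ⊔ Subgroup.zpowers y :=
          lt_of_le_of_ne le_sup_left
            (fun e => hy (e ▸ Subgroup.mem_sup_right (Subgroup.mem_zpowers y)))
        exact hlt.ne (le_antisymm hlt.le (hKmax hxmem hlt.le))
      haveI := norm (Subgroup.zpowers y)
      rw [← SetLike.mem_coe, Subgroup.mul_normal] at hxmem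
      obtain ⟨k, hk, z, hz, hkz⟩ := hxmem
      obtain ⟨m, rfl⟩ := hz
      simp only at hkz
      have hym : y ^ (m : ℤ) ≠ 1 := by
        intro e
        rw [e, mul_one] at hkz
        exact hK (hkz ▸ hk)
      have hy1 : y ≠ 1 := fun e => hy (e ▸ Subgroup.one_mem K)
      have hpm : ¬ ((p : ℤ) ∣ m) := by
        rintro ⟨t, rfl⟩
        apply hym
        rw [zpow_mul, zpow_natCast, hexp, one_zpow]
      have hcop : IsCoprime m (p : ℤ) := by
        rw [Int.isCoprime_iff_gcd_eq_one]
        have : ¬ p ∣ m.natAbs := fun hd => hpm (Int.natCast_dvd.mpr hd)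
        have := (Nat.Prime.coprime_iff_not_dvd hp).mpr this
        simp [Int.gcd, Nat.coprime_comm.mp this]
      obtain ⟨a, b, hab⟩ := hcop
      have hy' : y = (k⁻¹ * x) ^ a := by
        have h1 : y = y ^ (a * m + b * (p : ℤ)) := by rw [hab, zpow_one]
        rw [h1, zpow_add, mul_comm a m, zpow_mul, mul_comm b (p : ℤ), zpow_mul,
          zpow_natCast, hexp, one_zpow, mul_one]
        congr 1
        rw [← hkz, ← mul_assoc, inv_mul_cancel, one_mul]
      rw [hy']
      exact Subgroup.zpow_mem _ (Subgroup.mul_mem _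
        (Subgroup.mem_sup_left (Subgroup.inv_mem K hk))
        (Subgroup.mem_sup_right (Subgroup.mem_zpowers x))) a
  have hKtop : K ⊔ Subgroup.zpowers x = ⊤ := eq_top_iff.mpr fun y _ => key y
  have hcoatom : IsCoatom K := by
    constructor
    · exact fun e => hK (e ▸ Subgroup.mem_top x)
    · intro L hL
      have hxL : x ∈ L := by
        by_contra hxL
        exact hL.ne (le_antisymm hL.le (hKmax hxL hL.le))
      rw [eq_top_iff, ← hKtop]
      exact sup_le hL.le ((Subgroup.zpowers_le).mpr hxL)
  exact hK (frattini_le_coatom hcoatom hx)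

lemma frattini_eq_pcw_closure [Finite G] (hp : p.Prime) (hG : IsPGroup p G) :
    frattini G = Subgroup.closure (pcwSet p G) := by
  refine le_antisymm ?_ ?_
  · haveI := pcw_normal (p := p) (G := G)
    set N := Subgroup.closure (pcwSet p G) with hN
    have hexp : ∀ x : G ⧸ N, x ^ p = 1 := by
      intro x
      induction x using QuotientGroup.induction_on with
      | H g =>
        rw [← QuotientGroup.mk_pow, QuotientGroup.eq_one_iff]
        exact Subgroup.subset_closure ⟨g, 1, 1, by simp⟩
    have hcomm : ∀ a b : G ⧸ N, a * b = b * a := by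
      intro a b
      induction a using QuotientGroup.induction_on with
      | H g =>
        induction b using QuotientGroup.induction_on with
        | H h =>
          rw [← QuotientGroup.mk_mul, ← QuotientGroup.mk_mul, QuotientGroup.eq]
          refine Subgroup.subset_closure ⟨1, h⁻¹, g⁻¹, ?_⟩
          simp [commutatorElement_def, mul_assoc]
    have hbot : frattini (G ⧸ N) = ⊥ := frattini_eq_bot_of_elementary hp hexp hcomm
    have hle := frattini_le_comap_frattini_of_surjective (QuotientGroup.mk'_surjective N)
    rw [hbot, MonoidHom.comap_bot, QuotientGroup.ker_mk'] at hle
    exact hle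
  · rw [Subgroup.closure_le]
    intro x hx
    have : ∀ M ∈ {H : Subgroup G | IsCoatom H}, x ∈ M := fun M hM =>
      pcw_subset_coatom hp hG hM hx
    simp only [frattini, Order.radical]
    rw [SetLike.mem_coe]
    exact Subgroup.mem_iInf.mpr fun M => Subgroup.mem_iInf.mpr fun hM => this M hM

lemma closure_eq_pow_card [Finite G] {S : Set G} (h1 : 1 ∈ S) (hinv : ∀ x ∈ S, x⁻¹ ∈ S) :
    (Subgroup.closure S : Set G) = S ^ Nat.card G := by
  classical
  haveI := Fintype.ofFinite G
  haveI : ∀ k : ℕ, DecidablePred (· ∈ S ^ k) := fun k => Classical.decPred _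
  have hSinv : S⁻¹ = S := by
    ext x
    constructor
    · intro hx
      have : x⁻¹ ∈ S := Set.mem_inv.mp hx
      simpa using hinv _ this
    · intro hx
      exact Set.mem_inv.mpr (by simpa using hinv _ hx)
  have hmono : ∀ {a b : ℕ}, a ≤ b → S ^ a ⊆ S ^ b := fun hab => Set.pow_subset_pow_right h1 hab
  have hstab : ∀ k, Fintype.card G ≤ k → S ^ Fintype.card G = S ^ k := by
    intro k hk
    refine Set.Finite.eq_of_subset_of_card_le (Set.toFinite _) (hmono hk) ?_
    have h := Group.card_pow_eq_card_pow_card_univ S k hk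
    rw [← Nat.card_eq_fintype_card (α := ↥(S ^ k)), ← Nat.card_eq_fintype_card] at h
    exact le_of_eq h
  have hlist : ∀ l : List G, (∀ y ∈ l, y ∈ S) → l.prod ∈ S ^ l.length := by
    intro l
    induction l with
    | nil => intro _; simp [Set.mem_one]
    | cons a l ih =>
      intro hl
      rw [List.prod_cons, List.length_cons, pow_succ']
      exact Set.mul_mem_mul (hl a List.mem_cons_self)
        (ih fun y hy => hl y (List.mem_cons_of_mem a hy))
  apply Set.Subset.antisymm
  · intro x hx
    rw [SetLike.mem_coe, ← Subgroup.mem_toSubmonoid, Subgroup.closure_toSubmonoid, hSinv,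
      Set.union_self] at hx
    obtain ⟨l, hl, rfl⟩ := Submonoid.exists_list_of_mem_closure hx
    have h1' : l.prod ∈ S ^ l.length := hlist l hl
    have h2 : l.prod ∈ S ^ max (Fintype.card G) l.length := hmono (le_max_right _ _) h1'
    rw [← hstab _ (le_max_left _ _)] at h2
    rwa [Nat.card_eq_fintype_card]
  · intro x hx
    have hone : (1 : G) ∈ (Subgroup.closure S : Set G) := Subgroup.one_mem _
    have := Set.mul_mem_mul hx hone
    rw [Set.pow_mul_subgroupClosure ⟨1, h1⟩] at this
    simpa using this

lemma mem_pow_iff_ofFn {S : Set G} : ∀ {n : ℕ} {x : G},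
    x ∈ S ^ n ↔ ∃ f : Fin n → G, (∀ i, f i ∈ S) ∧ (List.ofFn f).prod = x := by
  intro n
  induction n with
  | zero =>
    intro x
    simp [Set.mem_one, eq_comm]
  | succ n ih =>
    intro x
    rw [pow_succ']
    constructor
    · rintro hx
      rw [Set.mem_mul] at hx
      obtain ⟨a, ha, y, hy, rfl⟩ := hx
      obtain ⟨f, hf, rfl⟩ := ih.mp hy
      refine ⟨Fin.cons a f, ?_, ?_⟩
      · intro i
        refine Fin.cases ?_ ?_ i <;> simp [ha, hf]
      · simp [List.ofFn_succ]
    · rintro ⟨f, hf, rfl⟩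
      rw [List.ofFn_succ, List.prod_cons]
      exact Set.mul_mem_mul (hf 0) (ih.mpr ⟨f ∘ Fin.succ, fun i => hf _, rfl⟩)

/-- Index of the `k`-th letter in the `i`-th block. -/
def widx {n : ℕ} (k : ℕ) (hk : k < 3) (i : Fin n) : Fin (3 * n) :=
  ⟨3 * i.1 + k, by have := i.isLt; omega⟩

end Auxiliary

/-- The Frattini subgroup of a finite p-group is a word image. -/
theorem frattini_is_word_image {p : ℕ} (hp : p.Prime) (G : Type*) [Group G]
    [Finite G] (hG : IsPGroup p G) :
    ∃ (d : ℕ) (_ : 1 ≤ d) (w : FreeGroup (Fin d)),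
      wordImage G w = (frattini G : Set G) := by
  set n := Nat.card G with hn
  have hn1 : 1 ≤ n := Nat.card_pos
  refine ⟨3 * n, by omega, ?_, ?_⟩
  · exact (List.ofFn fun i : Fin n =>
      (FreeGroup.of (widx 0 (by omega) i)) ^ p *
        ⁅FreeGroup.of (widx 1 (by omega) i), FreeGroup.of (widx 2 (by omega) i)⁆).prod
  have heval : ∀ f : Fin (3 * n) → G,
      FreeGroup.lift f ((List.ofFn fun i : Fin n =>
        (FreeGroup.of (widx 0 (by omega) i)) ^ p *
          ⁅FreeGroup.of (widx 1 (by omega) i), FreeGroup.of (widx 2 (by omega) i)⁆).prod)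
      = (List.ofFn fun i : Fin n =>
        (f (widx 0 (by omega) i)) ^ p *
          ⁅f (widx 1 (by omega) i), f (widx 2 (by omega) i)⁆).prod := by
    intro f
    rw [map_list_prod, List.map_ofFn]
    exact congrArg List.prod (congrArg List.ofFn (funext fun i => by
      simp [Function.comp, map_mul, map_pow, map_commutatorElement]))
  have hfr : (frattini G : Set G) = pcwSet p G ^ n := by
    rw [frattini_eq_pcw_closure hp hG, closure_eq_pow_card one_mem_pcwSet
      (fun x hx => inv_mem_pcwSet hx), hn]
  rw [wordImage, hfr]
  ext x
  constructor
  · rintro ⟨f, rfl⟩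
    beta_reduce
    rw [heval f]
    exact mem_pow_iff_ofFn.mpr ⟨_, fun i => ⟨_, _, _, rfl⟩, rfl⟩
  · intro hx
    obtain ⟨f, hfS, hfprod⟩ := mem_pow_iff_ofFn.mp hx
    choose a b c hf using hfS
    set F : Fin (3 * n) → G := fun j =>
      if j.1 % 3 = 0 then a ⟨j.1 / 3, by have := j.isLt; omega⟩
      else if j.1 % 3 = 1 then b ⟨j.1 / 3, by have := j.isLt; omega⟩
      else c ⟨j.1 / 3, by have := j.isLt; omega⟩ with hF
    have hF0 : ∀ i : Fin n, F (widx 0 (by omega) i) = a i := by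
      intro i
      rw [hF]
      simp only [widx]
      erw [if_pos (show (3 * i.1 + 0) % 3 = 0 by omega)]
      congr 1
      exact Fin.ext (by simp only [Fin.val_mk]; omega)
    have hF1 : ∀ i : Fin n, F (widx 1 (by omega) i) = b i := by
      intro i
      rw [hF]
      simp only [widx]
      erw [if_neg (show ¬ (3 * i.1 + 1) % 3 = 0 by omega), if_pos (show (3 * i.1 + 1) % 3 = 1 by omega)]
      congr 1
      exact Fin.ext (by simp only [Fin.val_mk]; omega)
    have hF2 : ∀ i : Fin n, F (widx 2 (by omega) i) = c i := by
      intro i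
      rw [hF]
      simp only [widx]
      erw [if_neg (show ¬ (3 * i.1 + 2) % 3 = 0 by omega), if_neg (show ¬ (3 * i.1 + 2) % 3 = 1 by omega)]
      congr 1
      exact Fin.ext (by simp only [Fin.val_mk]; omega)
    refine ⟨F, ?_⟩
    beta_reduce
    rw [heval F, ← hfprod]
    refine congrArg List.prod (congrArg List.ofFn (funext fun i => ?_))
    rw [hF0, hF1, hF2, ← hf i]
end

section
/- Let G be a nonabelian finite group such that for every d ≥ 1 and every word w in the free group F_d, the word image w(G) is one of {1}, Z(G) or G. Then there is a prime p such that G is a special p-group, i.e. G is a finite p-group whose center Z(G), commutator subgroup [G,G] and Frattini subgroup Φ(G) coincide and are elementary abelian (of exponent p). -/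
/-- G is a special p-group: a p-group whose center, commutator subgroup and Frattini
subgroup coincide and are elementary abelian of exponent p. -/
def IsSpecial (p : ℕ) (G : Type*) [Group G] : Prop :=
  IsPGroup p G ∧ Subgroup.center G = commutator G ∧
    Subgroup.center G = frattini G ∧ Monoid.exponent (Subgroup.center G) = p

open scoped commutatorElement

section Aux

variable {G : Type*} [Group G]

lemma wordImage_pow (G : Type*) [Group G] (n : ℕ) :
    wordImage G ((FreeGroup.of (0 : Fin 1)) ^ n) = Set.range fun g : G => g ^ n := by
  ext x
  constructor
  · rintro ⟨f, rfl⟩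
    exact ⟨f 0, by simp⟩
  · rintro ⟨g, rfl⟩
    exact ⟨fun _ => g, by simp⟩

lemma wordImage_comm (G : Type*) [Group G] :
    wordImage G ⁅FreeGroup.of (0 : Fin 2), FreeGroup.of (1 : Fin 2)⁆ = commutatorSet G := by
  ext x
  constructor
  · rintro ⟨f, rfl⟩
    exact ⟨f 0, f 1, by simp [map_commutatorElement]⟩
  · rintro ⟨a, b, rfl⟩
    exact ⟨![a, b], by simp [map_commutatorElement]⟩

lemma normal_of_commutator_le {M : Subgroup G} (h : commutator G ≤ M) : M.Normal := by
  constructor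
  intro m hm c
  have h1 : ⁅c, m⁆ ∈ M := by
    apply h
    rw [commutator_def]
    exact Subgroup.commutator_mem_commutator (Subgroup.mem_top c) (Subgroup.mem_top m)
  have h2 : c * m * c⁻¹ = ⁅c, m⁆ * m := by
    simp [commutatorElement_def, mul_assoc]
  rw [h2]
  exact M.mul_mem h1 hm

lemma commutator_le_coatom [Finite G] (hnil : Group.IsNilpotent G) {M : Subgroup G}
    (hM : IsCoatom M) : commutator G ≤ M := by
  haveI := hnil
  haveI hMn : M.Normal :=
    Subgroup.NormalizerCondition.normal_of_coatom M normalizerCondition_of_isNilpotent hM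
  set π := QuotientGroup.mk' M with hπ
  have hsurj : Function.Surjective π := QuotientGroup.mk'_surjective M
  have htriv : ∀ S : Subgroup (G ⧸ M), S = ⊥ ∨ S = ⊤ := by
    intro S
    have hle : M ≤ S.comap π := by
      intro m hm
      have h1 : π m = 1 := (QuotientGroup.eq_one_iff m).mpr hm
      rw [Subgroup.mem_comap, h1]
      exact S.one_mem
    rcases eq_or_lt_of_le hle with h | h
    · left
      rw [← Subgroup.map_comap_eq_self_of_surjective hsurj S, ← h]
      exact (Subgroup.map_eq_bot_iff M).mpr (le_of_eq (QuotientGroup.ker_mk' M).symm)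
    · right
      rw [← Subgroup.map_comap_eq_self_of_surjective hsurj S, hM.2 _ h]
      exact Subgroup.map_top_of_surjective π hsurj
  have hcomm : ∀ a b : G ⧸ M, a * b = b * a := by
    intro a b
    rcases eq_or_ne a 1 with rfl | ha
    · simp
    have hz : Subgroup.zpowers a = ⊤ := by
      rcases htriv (Subgroup.zpowers a) with h | h
      · exact absurd (Subgroup.zpowers_eq_bot.mp h) ha
      · exact h
    have hb : b ∈ Subgroup.zpowers a := by rw [hz]; trivial
    obtain ⟨k, hk⟩ := hb
    have hk' : a ^ k = b := hk
    rw [← hk']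
    exact ((Commute.refl a).zpow_right k).eq
  rw [commutator_def, Subgroup.commutator_le]
  intro g _ h _
  rw [← QuotientGroup.eq_one_iff (N := M) ⁅g, h⁆]
  have : ((⁅g, h⁆ : G) : G ⧸ M) = ⁅(g : G ⧸ M), (h : G ⧸ M)⁆ :=
    map_commutatorElement (QuotientGroup.mk' M) g h
  rw [this]
  exact commutatorElement_eq_one_iff_commute.mpr (hcomm _ _)

lemma exists_coatom_not_mem [Finite G] {p : ℕ} (hp : p.Prime)
    (hcomm : commutator G ≤ Subgroup.center G)
    (hpow : ∀ x : G, x ^ p ∈ Subgroup.center G)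
    {g : G} (hg : g ∉ Subgroup.center G) :
    ∃ M : Subgroup G, IsCoatom M ∧ g ∉ M := by
  haveI : Finite (Subgroup G) :=
    Finite.of_injective (fun H : Subgroup G => (H : Set G)) SetLike.coe_injective
  set S : Set (Subgroup G) := {H | Subgroup.center G ≤ H ∧ g ∉ H} with hS
  obtain ⟨M, hMS, hMmax⟩ :=
    Set.Finite.exists_maximalFor id S (Set.toFinite S) ⟨Subgroup.center G, le_refl _, hg⟩
  have hgM : g ∉ M := hMS.2
  have hkey : ∀ K : Subgroup G, M < K → g ∈ K := by
    intro K hK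
    by_contra hgK
    exact hK.ne (le_antisymm hK.le (hMmax ⟨le_trans hMS.1 hK.le, hgK⟩ hK.le))
  haveI hMn : M.Normal := normal_of_commutator_le (le_trans hcomm hMS.1)
  refine ⟨M, ⟨fun h => hgM (h.symm ▸ Subgroup.mem_top g), ?_⟩, hgM⟩
  intro K hK
  have hgK : g ∈ K := hkey K hK
  rw [eq_top_iff]
  intro x _
  by_cases hxM : x ∈ M
  · exact hK.le hxM
  set π := QuotientGroup.mk' M with hπdef
  have hπg : π g ≠ 1 := fun h => hgM ((QuotientGroup.eq_one_iff g).mp h)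
  have hlt : M < M ⊔ Subgroup.zpowers x := by
    refine lt_of_le_of_ne le_sup_left fun h => hxM ?_
    rw [h]
    exact (le_sup_right : Subgroup.zpowers x ≤ M ⊔ Subgroup.zpowers x) (Subgroup.mem_zpowers x)
  have hgsup : g ∈ M ⊔ Subgroup.zpowers x := hkey _ hlt
  have hmap : Subgroup.map π (M ⊔ Subgroup.zpowers x) = Subgroup.zpowers (π x) := by
    rw [Subgroup.map_sup, MonoidHom.map_zpowers,
      (Subgroup.map_eq_bot_iff M).mpr (le_of_eq (QuotientGroup.ker_mk' M).symm), bot_sup_eq]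
  have hπgx : π g ∈ Subgroup.zpowers (π x) := hmap ▸ Subgroup.mem_map_of_mem π hgsup
  obtain ⟨k, hk0⟩ := hπgx
  have hk : (π x) ^ k = π g := hk0
  have hxp : (π x) ^ (p : ℤ) = 1 := by
    rw [zpow_natCast, ← map_pow]
    exact (QuotientGroup.eq_one_iff _).mpr (hMS.1 (hpow x))
  have hpk : ¬ ((p : ℤ) ∣ k) := by
    rintro ⟨t, rfl⟩
    apply hπg
    rw [← hk, zpow_mul, hxp, one_zpow]
  have hco : IsCoprime (k : ℤ) ((p : ℤ)) := by
    rw [Int.isCoprime_iff_gcd_eq_one]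
    have hnd : ¬ (p ∣ k.natAbs) := fun h => hpk (Int.natCast_dvd.mpr h)
    have := (hp.coprime_iff_not_dvd).mpr hnd
    simpa [Int.gcd, Nat.coprime_comm] using this.symm
  obtain ⟨a, b, hab⟩ := hco
  have hx2 : π x ∈ Subgroup.zpowers (π g) := by
    have hcalc : π x = (π g) ^ a := by
      calc π x = (π x) ^ (a * k + b * (p : ℤ)) := by rw [hab, zpow_one]
      _ = ((π x) ^ k) ^ a * ((π x) ^ (p : ℤ)) ^ b := by
          rw [zpow_add, mul_comm a k, mul_comm b (p : ℤ), zpow_mul, zpow_mul]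
      _ = (π g) ^ a := by rw [hk, hxp, one_zpow, mul_one]
    rw [hcalc]
    exact Subgroup.zpow_mem _ (Subgroup.mem_zpowers _) a
  obtain ⟨j, hj0⟩ := hx2
  have hj : (π g) ^ j = π x := hj0
  have hmem : (g ^ j)⁻¹ * x ∈ M := by
    rw [← QuotientGroup.eq_one_iff (N := M)]
    have : ((((g ^ j)⁻¹ * x : G)) : G ⧸ M) = (π (g ^ j))⁻¹ * π x := by
      simp [hπdef]
    rw [this, map_zpow, hj, inv_mul_cancel]
  have hx : x = g ^ j * ((g ^ j)⁻¹ * x) := by group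
  rw [hx]
  exact K.mul_mem (K.zpow_mem hgK j) (hK.le hmem)

lemma mem_range_pow_ordCompl [Finite G] {s : ℕ} (hs : s.Prime) {x : G} (hx : orderOf x = s) :
    x ∈ Set.range fun g : G => g ^ (ordCompl[s] (Monoid.exponent G)) := by
  have he : Monoid.exponent G ≠ 0 := Monoid.exponent_ne_zero_of_finite
  set m := ordCompl[s] (Monoid.exponent G) with hm
  have hcop : Nat.Coprime m s :=
    ((hs.coprime_iff_not_dvd).mpr (Nat.not_dvd_ordCompl hs he)).symm
  obtain ⟨c, -, hc⟩ := Nat.exists_mul_mod_eq_one_of_coprime hcop hs.one_lt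
  refine ⟨x ^ c, ?_⟩
  show (x ^ c) ^ m = x
  rw [← pow_mul, mul_comm c m]
  conv_rhs => rw [← pow_one x]
  rw [pow_eq_pow_iff_modEq, hx]
  show m * c % s = 1 % s
  rw [hc, Nat.mod_eq_of_lt hs.one_lt]

lemma pow_ordCompl_prime_pow_eq_one [Finite G] (s : ℕ) (g : G) :
    (g ^ (ordCompl[s] (Monoid.exponent G))) ^ s ^ ((Monoid.exponent G).factorization s) = 1 := by
  rw [← pow_mul, mul_comm, Nat.ordProj_mul_ordCompl_eq_self]
  exact Monoid.pow_exponent_eq_one g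

end Aux

/-- A nonabelian finite group whose only word images are {1}, Z(G) and G
is a special p-group. -/
theorem special_through_word_images (G : Type*) [Group G] [Finite G]
    (hna : ¬ ∀ a b : G, a * b = b * a)
    (hw : ∀ (d : ℕ), 1 ≤ d → ∀ w : FreeGroup (Fin d),
      wordImage G w = {(1 : G)} ∨
      wordImage G w = (Subgroup.center G : Set G) ∨
      wordImage G w = (Set.univ : Set G)) :
    ∃ p : ℕ, p.Prime ∧ IsSpecial p G := by
  push_neg at hna
  obtain ⟨a, b, hab⟩ := hna
  haveI : Nontrivial G := ⟨⟨a * b, b * a, hab⟩⟩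
  haveI : Fintype G := Fintype.ofFinite G
  have hcard1 : Nat.card G ≠ 1 := by
    intro h
    haveI := (Nat.card_eq_one_iff_unique.mp h).1
    exact hab (Subsingleton.elim _ _)
  have he : Monoid.exponent G ≠ 0 := Monoid.exponent_ne_zero_of_finite
  have hpowim : ∀ n : ℕ, (Set.range fun g : G => g ^ n) = {1} ∨
      (Set.range fun g : G => g ^ n) = (Subgroup.center G : Set G) ∨
      (Set.range fun g : G => g ^ n) = Set.univ := by
    intro n
    have := hw 1 le_rfl ((FreeGroup.of 0) ^ n)
    rwa [wordImage_pow] at this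
  -- all primes dividing the order coincide
  have huniq : ∀ q r : ℕ, q.Prime → r.Prime → q ∣ Nat.card G → r ∣ Nat.card G → q = r := by
    intro q r hq hr hqd hrd
    by_contra hqr
    have main : ∀ s t : ℕ, s.Prime → t.Prime → s ∣ Nat.card G → t ∣ Nat.card G → s ≠ t →
        (Set.range fun g : G => g ^ (ordCompl[s] (Monoid.exponent G)))
          = (Subgroup.center G : Set G) := by
      intro s t hs ht hsd htd hst
      haveI : Fact s.Prime := ⟨hs⟩
      haveI : Fact t.Prime := ⟨ht⟩
      obtain ⟨x, hx⟩ := exists_prime_orderOf_dvd_card (G := G) s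
        (by rwa [← Nat.card_eq_fintype_card])
      obtain ⟨y, hy⟩ := exists_prime_orderOf_dvd_card (G := G) t
        (by rwa [← Nat.card_eq_fintype_card])
      rcases hpowim (ordCompl[s] (Monoid.exponent G)) with h1 | h2 | h3
      · exfalso
        have hx1 : x = 1 := by
          have := mem_range_pow_ordCompl hs hx
          rw [h1] at this
          exact this
        rw [hx1, orderOf_one] at hx
        exact hs.one_lt.ne hx
      · exact h2
      · exfalso
        have hyr : y ∈ Set.range fun g : G => g ^ (ordCompl[s] (Monoid.exponent G)) := by
          rw [h3]; trivial
        obtain ⟨g, hg0⟩ := hyr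
        have hg : g ^ (ordCompl[s] (Monoid.exponent G)) = y := hg0
        have h1 : y ^ s ^ ((Monoid.exponent G).factorization s) = 1 := by
          rw [← hg]; exact pow_ordCompl_prime_pow_eq_one s g
        have h2 : t ∣ s ^ ((Monoid.exponent G).factorization s) := by
          rw [← hy]; exact orderOf_dvd_of_pow_eq_one h1
        exact hst ((Nat.prime_dvd_prime_iff_eq ht hs).mp (ht.dvd_of_dvd_pow h2)).symm
    have h1 := main q r hq hr hqd hrd hqr
    have h2 := main r q hr hq hrd hqd (Ne.symm hqr)
    haveI : Fact q.Prime := ⟨hq⟩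
    obtain ⟨x, hx⟩ := exists_prime_orderOf_dvd_card (G := G) q
      (by rwa [← Nat.card_eq_fintype_card])
    have hx1 : x ∈ (Subgroup.center G : Set G) := h1 ▸ mem_range_pow_ordCompl hq hx
    rw [← h2] at hx1
    obtain ⟨g, hg0⟩ := hx1
    have hg : g ^ (ordCompl[r] (Monoid.exponent G)) = x := hg0
    have h3 : x ^ r ^ ((Monoid.exponent G).factorization r) = 1 := by
      rw [← hg]; exact pow_ordCompl_prime_pow_eq_one r g
    have h4 : q ∣ r ^ ((Monoid.exponent G).factorization r) := by
      rw [← hx]; exact orderOf_dvd_of_pow_eq_one h3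
    exact hqr ((Nat.prime_dvd_prime_iff_eq hq hr).mp (hq.dvd_of_dvd_pow h4))
  set p := (Nat.card G).minFac with hpdef
  have hp : p.Prime := Nat.minFac_prime hcard1
  have hpd : p ∣ Nat.card G := Nat.minFac_dvd _
  haveI : Fact p.Prime := ⟨hp⟩
  have hpG : IsPGroup p G := by
    intro g
    have hdvd : orderOf g ∣ Nat.card G := orderOf_dvd_natCard g
    have hne : orderOf g ≠ 0 := (orderOf_pos g).ne'
    have := Nat.eq_prime_pow_of_unique_prime_dvd hne
      (fun {d} hd hdd => huniq d p hd hp (hdd.trans hdvd) hpd)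
    exact ⟨(orderOf g).primeFactorsList.length, by rw [← this]; exact pow_orderOf_eq_one g⟩
  have hnil : Group.IsNilpotent G := hpG.isNilpotent
  haveI hZnt : Nontrivial (Subgroup.center G) := hpG.center_nontrivial
  -- commutators
  have hCS := hw 2 (by norm_num) ⁅FreeGroup.of (0 : Fin 2), FreeGroup.of (1 : Fin 2)⁆
  rw [wordImage_comm] at hCS
  have hCne1 : commutatorSet G ≠ {1} := by
    intro h
    apply hab
    have hmem : ⁅a, b⁆ ∈ commutatorSet G := ⟨a, b, rfl⟩
    rw [h] at hmem
    exact commutatorElement_eq_one_iff_commute.mp hmem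
  have hCnuniv : commutatorSet G ≠ Set.univ := by
    intro h
    have hct : commutator G = ⊤ := by
      rw [commutator_eq_closure, h]
      exact Subgroup.closure_univ
    haveI : Finite (Subgroup G) :=
      Finite.of_injective (fun H : Subgroup G => (H : Set G)) SetLike.coe_injective
    have hbt : (⊥ : Subgroup G) ≠ ⊤ := by
      intro hb
      obtain ⟨u, v, huv⟩ := exists_pair_ne G
      apply huv
      have hu : u ∈ (⊥ : Subgroup G) := hb ▸ Subgroup.mem_top u
      have hv : v ∈ (⊥ : Subgroup G) := hb ▸ Subgroup.mem_top v
      rw [Subgroup.mem_bot] at hu hv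
      rw [hu, hv]
    obtain ⟨M, hMp, hMmax⟩ := Set.Finite.exists_maximalFor id {H : Subgroup G | H ≠ ⊤}
      (Set.toFinite _) ⟨⊥, hbt⟩
    have hM : IsCoatom M := by
      refine ⟨hMp, fun K hK => ?_⟩
      by_contra hKt
      exact hK.ne (le_antisymm hK.le (hMmax hKt hK.le))
    exact hM.1 (top_le_iff.mp (hct ▸ commutator_le_coatom hnil hM))
  have hCZ : commutatorSet G = (Subgroup.center G : Set G) :=
    (hCS.resolve_left hCne1).resolve_right hCnuniv
  have hZC : Subgroup.center G = commutator G := by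
    rw [commutator_eq_closure, hCZ, Subgroup.closure_eq]
  -- p-th powers
  have hPnu : (Set.range fun g : G => g ^ p) ≠ Set.univ := by
    intro h
    have hsurj : Function.Surjective fun g : G => g ^ p := Set.range_eq_univ.mp h
    have hinj : Function.Injective fun g : G => g ^ p :=
      Finite.injective_iff_surjective.mpr hsurj
    obtain ⟨x, hx⟩ := exists_prime_orderOf_dvd_card (G := G) p
      (by rwa [← Nat.card_eq_fintype_card])
    have hx1 : x = 1 := hinj (show x ^ p = 1 ^ p by rw [one_pow, ← hx, pow_orderOf_eq_one])
    rw [hx1, orderOf_one] at hx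
    exact hp.one_lt.ne hx
  have hP : (∀ g : G, g ^ p = 1) ∨
      (Set.range fun g : G => g ^ p) = (Subgroup.center G : Set G) := by
    rcases hpowim p with h | h | h
    · left
      intro g
      have : g ^ p ∈ ({1} : Set G) := h ▸ ⟨g, rfl⟩
      exact this
    · right; exact h
    · exact absurd h hPnu
  have hpowZ : ∀ g : G, g ^ p ∈ Subgroup.center G := by
    rcases hP with h | h
    · intro g; rw [h g]; exact (Subgroup.center G).one_mem
    · intro g
      rw [← SetLike.mem_coe, ← h]
      exact ⟨g, rfl⟩
  -- p²-th powers are trivial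
  have hQ : ∀ g : G, g ^ (p * p) = 1 := by
    rcases hpowim (p * p) with h | h | h
    · intro g
      have : g ^ (p * p) ∈ ({1} : Set G) := h ▸ ⟨g, rfl⟩
      exact this
    · exfalso
      have hsurj : Function.Surjective fun z : Subgroup.center G => z ^ p := by
        intro z
        have hz : (z : G) ∈ Set.range fun g : G => g ^ (p * p) := by
          rw [h]; exact z.2
        obtain ⟨g, hg0⟩ := hz
        have hg : g ^ (p * p) = (z : G) := hg0
        refine ⟨⟨g ^ p, hpowZ g⟩, ?_⟩
        apply Subtype.ext
        show ((⟨g ^ p, hpowZ g⟩ : Subgroup.center G) : G) ^ p = (z : G)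
        show (g ^ p) ^ p = (z : G)
        rw [← pow_mul]
        exact hg
      have hinj : Function.Injective fun z : Subgroup.center G => z ^ p :=
        Finite.injective_iff_surjective.mpr hsurj
      have hcZ : p ∣ Nat.card (Subgroup.center G) := by
        have h1 : Nat.card (Subgroup.center G) ≠ 1 := by
          intro hc
          haveI := (Nat.card_eq_one_iff_unique.mp hc).1
          obtain ⟨u, v, huv⟩ := hZnt.exists_pair_ne
          exact huv (Subsingleton.elim u v)
        have hd : Nat.card (Subgroup.center G) ∣ Nat.card G :=
          Subgroup.card_subgroup_dvd_card _
        have hmf := Nat.minFac_prime h1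
        have heq : (Nat.card (Subgroup.center G)).minFac = p :=
          huniq _ p hmf hp ((Nat.minFac_dvd _).trans hd) hpd
        exact heq ▸ Nat.minFac_dvd _
      haveI : Fintype (Subgroup.center G) := Fintype.ofFinite _
      obtain ⟨z, hz⟩ := exists_prime_orderOf_dvd_card (G := Subgroup.center G) p
        (by rwa [← Nat.card_eq_fintype_card])
      have hz1 : z = 1 := hinj (show z ^ p = 1 ^ p by rw [one_pow, ← hz, pow_orderOf_eq_one])
      rw [hz1, orderOf_one] at hz
      exact hp.one_lt.ne hz
    · exfalso
      apply hab
      have hZuniv : b ∈ Subgroup.center G := by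
        have hb : b ∈ Set.range fun g : G => g ^ (p * p) := by rw [h]; trivial
        obtain ⟨g, hg0⟩ := hb
        have hg : g ^ (p * p) = b := hg0
        rw [← hg, pow_mul]
        exact Subgroup.pow_mem _ (hpowZ g) p
      exact (Subgroup.mem_center_iff.mp hZuniv) a
  -- exponent of the center
  have hZp : ∀ z : Subgroup.center G, z ^ p = 1 := by
    intro z
    apply Subtype.ext
    show ((z : G)) ^ p = 1
    rcases hP with h | h
    · exact h (z : G)
    · have hz : (z : G) ∈ Set.range fun g : G => g ^ p := by
        rw [h]; exact z.2
      obtain ⟨g, hg0⟩ := hz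
      have hg : g ^ p = (z : G) := hg0
      calc ((z : G)) ^ p = (g ^ p) ^ p := by rw [hg]
      _ = g ^ (p * p) := by rw [← pow_mul]
      _ = 1 := hQ g
  have hexp : Monoid.exponent (Subgroup.center G) = p := by
    have hd : Monoid.exponent (Subgroup.center G) ∣ p :=
      Monoid.exponent_dvd_of_forall_pow_eq_one hZp
    rcases hp.eq_one_or_self_of_dvd _ hd with h | h
    · exfalso
      have := Monoid.exp_eq_one_iff.mp h
      obtain ⟨u, v, huv⟩ := hZnt.exists_pair_ne
      exact huv (Subsingleton.elim u v)
    · exact h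
  -- Frattini subgroup
  have hfr : Subgroup.center G = frattini G := by
    apply le_antisymm
    · show Subgroup.center G ≤ Order.radical (Subgroup G)
      refine le_iInf₂ fun M hM => ?_
      rw [hZC]
      exact commutator_le_coatom hnil hM
    · intro x hx
      by_contra hxZ
      obtain ⟨M, hM, hgM⟩ := exists_coatom_not_mem hp (le_of_eq hZC.symm) hpowZ hxZ
      exact hgM (frattini_le_coatom hM hx)
  exact ⟨p, hp, hpG, hZC, hfr, hexp⟩
end
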